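/- (Cigler's even identity) For all k, m ≥ 1 and n ≥ 0, det(C_{2k, i+j+1-k-m})_{i,j=0}^{n+m+k-1} = (-1)^{binom(m+k,2)} · det(C_{2k, i+j+1-k+m})_{i,j=0}^{n-1}, where an empty determinant equals 1. -/

import Mathlib

/-- Convoluted Catalan number `C_{K,p}` for natural `p`, with the
convention `binom(n,-1) = 0`. -/
def convCatalan (K p : ℕ) : ℤ :=
  ((2 * p + K - 1).choose p : ℤ) -
    (if p = 0 then 0 else ((2 * p + K - 1).choose (p - 1) : ℤ))

/-- Convoluted Catalan number for an integer index: `C_{K,p} = 0` for `p < 0`. -/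
def convCatalanZ (K : ℕ) (p : ℤ) : ℤ :=
  if p < 0 then 0 else convCatalan K p.toNat

/-- The Hankel determinant `D_{K,M}(N) = det(C_{K,i+j+M})_{i,j=0}^{N-1}`
(equal to `1` for `N = 0`). -/
def hankelDet (K : ℕ) (M : ℤ) (N : ℕ) : ℤ :=
  Matrix.det (Matrix.of fun i j : Fin N => convCatalanZ K ((i : ℕ) + (j : ℕ) + M))

open PowerSeries Finset Matrix

namespace Cig

noncomputable def cS : PowerSeries ℤ := PowerSeries.mk fun p => (catalan p : ℤ)

lemma cS_eq : cS = 1 + PowerSeries.X * cS ^ 2 := by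
  ext p
  cases p with
  | zero => simp [cS]
  | succ p =>
    rw [map_add, PowerSeries.coeff_succ_X_mul]
    simp only [cS, pow_two, PowerSeries.coeff_mul, PowerSeries.coeff_mk,
      PowerSeries.coeff_one, Nat.succ_ne_zero, if_false, zero_add]
    rw [catalan_succ' p]
    push_cast
    rfl

lemma pascal_step (K p : ℕ) :
    convCatalan (K + 1) (p + 1) = convCatalan K (p + 1) + convCatalan (K + 2) p := by
  unfold convCatalan
  have e1 : 2 * (p+1) + (K+1) - 1 = (2*p + K + 1) + 1 := by omega
  have e2 : 2 * (p+1) + K - 1 = 2*p + K + 1 := by omega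
  have e3 : 2 * p + (K+2) - 1 = 2*p + K + 1 := by omega
  rw [e1, e2, e3]
  have h1 : (2*p+K+2).choose (p+1) = (2*p+K+1).choose p + (2*p+K+1).choose (p+1) :=
    Nat.choose_succ_succ _ _
  cases p with
  | zero =>
    simp only [if_true]
    push_cast [h1]
    simp only [Nat.choose_zero_right, Nat.choose_one_right]
    push_cast
    ring
  | succ q =>
    have h2 : (2*(q+1)+K+2).choose (q+1) = (2*(q+1)+K+1).choose q + (2*(q+1)+K+1).choose (q+1) :=
      Nat.choose_succ_succ _ _
    simp only [Nat.succ_ne_zero, if_false, Nat.add_sub_cancel]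
    push_cast [h1, h2]
    ring

lemma coeff_cS_pow (p K : ℕ) : (PowerSeries.coeff (R := ℤ) p) (cS ^ K) = convCatalan K p := by
  induction p using Nat.strong_induction_on generalizing K with
  | _ p ih =>
    cases p with
    | zero =>
      simp only [PowerSeries.coeff_zero_eq_constantCoeff, map_pow]
      have : constantCoeff (R := ℤ) cS = 1 := by simp [cS]
      rw [this, one_pow]
      simp [convCatalan]
    | succ p =>
      induction K with
      | zero =>
        simp only [pow_zero, PowerSeries.coeff_one, Nat.succ_ne_zero, if_false]
        unfold convCatalan
        have e : 2 * (p+1) + 0 - 1 = 2*p + 1 := by omega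
        rw [e]
        have h : (2*p+1).choose p = (2*p+1).choose (p+1) := by
          have := Nat.choose_symm (n := 2*p+1) (k := p+1) (by omega)
          simpa [show 2*p+1 - (p+1) = p by omega] using this
        simp [h]
      | succ K ihK =>
        have hdec : cS ^ (K+1) = cS ^ K + PowerSeries.X * cS ^ (K+2) := by
          calc cS ^ (K+1) = cS ^ K * (1 + PowerSeries.X * cS ^ 2) := by rw [← cS_eq, pow_succ]
            _ = cS ^ K + PowerSeries.X * cS ^ (K+2) := by ring
        rw [hdec, map_add, PowerSeries.coeff_succ_X_mul, ihK, ih p (Nat.lt_succ_self p),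
          pascal_step]

noncomputable def dS : PowerSeries ℤ := 1 - PowerSeries.X * cS
noncomputable def uS : PowerSeries ℤ := PowerSeries.X * cS

lemma cS_mul_dS : cS * dS = 1 := by
  have h : PowerSeries.X * cS ^ 2 = cS - 1 := by conv_rhs => rw [cS_eq]; ring
  unfold dS
  have h2 : cS * (1 - PowerSeries.X * cS) = cS - PowerSeries.X * cS ^ 2 := by ring
  rw [h2, h]
  ring

lemma u_add_d : uS + dS = 1 := by unfold uS dS; ring

lemma u_mul_d : uS * dS = PowerSeries.X := by
  have h : PowerSeries.X * cS ^ 2 = cS - 1 := by conv_rhs => rw [cS_eq]; ring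
  unfold uS dS
  calc PowerSeries.X * cS * (1 - PowerSeries.X * cS)
      = PowerSeries.X * cS - PowerSeries.X * (PowerSeries.X * cS ^ 2) := by ring
    _ = PowerSeries.X := by rw [h]; ring

lemma coeff_S_vanish (j p : ℕ) (h : j < 2 * p) :
    (PowerSeries.coeff (R := ℤ) p) (dS ^ j + uS ^ j) = 0 := by
  induction j using Nat.strong_induction_on generalizing p with
  | _ j ih =>
    match j with
    | 0 =>
      have hp : p ≠ 0 := by omega
      simp only [pow_zero]
      rw [map_add, PowerSeries.coeff_one, if_neg hp]
      norm_num
    | 1 =>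
      have hp : p ≠ 0 := by omega
      simp only [pow_one]
      rw [show dS + uS = 1 by rw [← u_add_d]; ring, PowerSeries.coeff_one, if_neg hp]
    | (j+2) =>
      have key : dS ^ (j+2) + uS ^ (j+2)
          = (dS ^ (j+1) + uS ^ (j+1)) - PowerSeries.X * (dS ^ j + uS ^ j) := by
        have h1 : uS + dS = 1 := u_add_d
        have h2 : uS * dS = PowerSeries.X := u_mul_d
        calc dS ^ (j+2) + uS ^ (j+2)
            = (uS + dS) * (dS ^ (j+1) + uS ^ (j+1)) - (uS * dS) * (dS ^ j + uS ^ j) := by ring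
          _ = _ := by rw [h1, h2]; ring
      rw [key, map_sub, ih (j+1) (by omega) p (by omega)]
      rcases Nat.eq_zero_or_pos p with hp | hp
      · omega
      · obtain ⟨q, rfl⟩ := Nat.exists_eq_succ_of_ne_zero (by omega : p ≠ 0)
        rw [PowerSeries.coeff_succ_X_mul, ih j (by omega) q (by omega)]
        ring
lemma coeff_dS_pow_head (k p : ℕ) (hp : k + 1 ≤ p) :
    (PowerSeries.coeff (R := ℤ) p) (dS ^ (2*k)) =
      -(if 2*k ≤ p then (PowerSeries.coeff (R := ℤ) (p - 2*k)) (cS ^ (2*k)) else 0) := by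
  have h0 : (PowerSeries.coeff (R := ℤ) p) (dS ^ (2*k) + uS ^ (2*k)) = 0 :=
    coeff_S_vanish (2*k) p (by omega)
  have h1 : uS ^ (2*k) = PowerSeries.X ^ (2*k) * cS ^ (2*k) := by
    unfold uS; rw [mul_pow]
  have h2 : (PowerSeries.coeff (R := ℤ) p) (uS ^ (2*k)) =
      if 2*k ≤ p then (PowerSeries.coeff (R := ℤ) (p - 2*k)) (cS ^ (2*k)) else 0 := by
    rw [h1, PowerSeries.coeff_X_pow_mul']
  rw [map_add] at h0
  linarith [h0, h2]

noncomputable def toepS (φ : PowerSeries ℤ) (T : ℕ) : Matrix (Fin T) (Fin T) ℤ :=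
  Matrix.of fun a b => if (b : ℕ) ≤ (a : ℕ) then (PowerSeries.coeff (R := ℤ) ((a : ℕ) - b)) φ else 0

lemma toepS_mul (φ ψ : PowerSeries ℤ) (T : ℕ) :
    toepS φ T * toepS ψ T = toepS (φ * ψ) T := by
  ext a b
  simp only [toepS, Matrix.mul_apply, Matrix.of_apply]
  by_cases hab : (b : ℕ) ≤ (a : ℕ)
  · rw [if_pos hab]
    rw [PowerSeries.coeff_mul,
      Finset.Nat.sum_antidiagonal_eq_sum_range_succ
        (fun i j => (PowerSeries.coeff (R := ℤ) i) φ * (PowerSeries.coeff (R := ℤ) j) ψ)]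
    -- RHS : ∑ i in range (a-b+1), coeff i φ * coeff (a-b-i) ψ
    -- LHS : ∑ c : Fin T, (if c ≤ a ..)(if b ≤ c ..)
    rw [Fin.sum_univ_eq_sum_range
      (fun c : ℕ => (if c ≤ (a:ℕ) then (PowerSeries.coeff (R := ℤ) ((a:ℕ) - c)) φ else 0) *
        (if (b:ℕ) ≤ c then (PowerSeries.coeff (R := ℤ) (c - b)) ψ else 0)) T]
    have hsub : Finset.Icc (b:ℕ) (a:ℕ) ⊆ Finset.range T := by
      intro c hc
      simp only [Finset.mem_Icc] at hc
      exact Finset.mem_range.mpr (lt_of_le_of_lt hc.2 a.isLt)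
    rw [← Finset.sum_subset hsub ?zero]
    case zero =>
      intro c _ hc
      simp only [Finset.mem_Icc, not_and_or, not_le] at hc
      rcases hc with hc | hc
      · rw [if_neg (show ¬ ((b:ℕ) ≤ c) by omega), mul_zero]
      · rw [if_neg (show ¬ (c ≤ (a:ℕ)) by omega), zero_mul]
    calc ∑ c ∈ Finset.Icc (b:ℕ) (a:ℕ),
          (if c ≤ (a:ℕ) then (PowerSeries.coeff (R := ℤ) ((a:ℕ) - c)) φ else 0) *
            (if (b:ℕ) ≤ c then (PowerSeries.coeff (R := ℤ) (c - b)) ψ else 0)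
        = ∑ c ∈ Finset.Icc (b:ℕ) (a:ℕ),
            (PowerSeries.coeff (R := ℤ) ((a:ℕ) - c)) φ * (PowerSeries.coeff (R := ℤ) (c - b)) ψ := by
          refine Finset.sum_congr rfl (fun c hc => ?_)
          simp only [Finset.mem_Icc] at hc
          rw [if_pos hc.2, if_pos hc.1]
      _ = ∑ kk ∈ Finset.range ((a:ℕ) - b).succ,
            (PowerSeries.coeff (R := ℤ) kk) φ * (PowerSeries.coeff (R := ℤ) ((a:ℕ) - b - kk)) ψ := by
          refine Finset.sum_nbij' (fun c => (a:ℕ) - c) (fun kk => (a:ℕ) - kk) ?_ ?_ ?_ ?_ ?_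
          · intro c hc; simp only [Finset.mem_Icc] at hc
            simp only [Finset.mem_range]; omega
          · intro kk hk; simp only [Finset.mem_range, Nat.lt_succ_iff] at hk
            simp only [Finset.mem_Icc]; omega
          · intro c hc; simp only [Finset.mem_Icc] at hc; omega
          · intro kk hk; simp only [Finset.mem_range, Nat.lt_succ_iff] at hk; omega
          · intro c hc; simp only [Finset.mem_Icc] at hc
            rw [show (c:ℕ) - b = (a:ℕ) - b - ((a:ℕ) - c) by omega]
  · rw [if_neg hab]
    apply Finset.sum_eq_zero
    intro c _
    by_cases h1 : (c : ℕ) ≤ (a : ℕ)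
    · have h2 : ¬ ((b : ℕ) ≤ (c : ℕ)) := by omega
      rw [if_neg h2, mul_zero]
    · rw [if_neg h1, zero_mul]

lemma toepS_one (T : ℕ) : toepS 1 T = 1 := by
  ext a b
  simp only [toepS, Matrix.of_apply, PowerSeries.coeff_one, Matrix.one_apply]
  by_cases hab : (b:ℕ) ≤ (a:ℕ)
  · rw [if_pos hab]
    by_cases he : a = b
    · subst he; simp
    · have hv : (a:ℕ) ≠ (b:ℕ) := fun h => he (Fin.ext h)
      rw [if_neg (by omega), if_neg he]
  · have he : a ≠ b := by
      rintro rfl; exact hab le_rfl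
    rw [if_neg hab, if_neg he]

lemma det_toepS (φ : PowerSeries ℤ) (T : ℕ) (h : PowerSeries.constantCoeff (R := ℤ) φ = 1) :
    (toepS φ T).det = 1 := by
  have htri : Matrix.BlockTriangular (toepS φ T) OrderDual.toDual := by
    intro a b hab
    have : (a:ℕ) < (b:ℕ) := hab
    simp only [toepS, Matrix.of_apply]
    rw [if_neg (by omega)]
  rw [Matrix.det_of_lowerTriangular _ htri]
  have : ∀ i : Fin T, toepS φ T i i = 1 := by
    intro i
    simp only [toepS, Matrix.of_apply, if_pos le_rfl, Nat.sub_self,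
      PowerSeries.coeff_zero_eq_constantCoeff, h]
  simp [this]

def shiftM (T : ℕ) : Matrix (Fin T) (Fin T) ℤ :=
  Matrix.of fun i j => if (j : ℕ) = ((i : ℕ) + 1) % T then 1 else 0

def revM (r : ℕ) : Matrix (Fin r) (Fin r) ℤ :=
  Matrix.of fun i j => if (i : ℕ) + (j : ℕ) = r - 1 then 1 else 0

lemma shiftM_mul (T : ℕ) (M : Matrix (Fin T) (Fin T) ℤ) (i j : Fin T) :
    (shiftM T * M) i j = M ⟨((i:ℕ)+1) % T, Nat.mod_lt _ (Fin.pos i)⟩ j := by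
  simp only [Matrix.mul_apply, shiftM, Matrix.of_apply]
  rw [Finset.sum_eq_single (⟨((i:ℕ)+1) % T, Nat.mod_lt _ (Fin.pos i)⟩ : Fin T)]
  · rw [if_pos rfl, one_mul]
  · intro c _ hc
    rw [if_neg (fun h => hc (Fin.ext h)), zero_mul]
  · intro h; exact absurd (Finset.mem_univ _) h

lemma shiftM_pow_mul (T : ℕ) (hT : 0 < T) (nn : ℕ) (M : Matrix (Fin T) (Fin T) ℤ)
    (i j : Fin T) :
    (shiftM T ^ nn * M) i j = M ⟨((i:ℕ)+nn) % T, Nat.mod_lt _ hT⟩ j := by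
  induction nn generalizing i with
  | zero => simp [Nat.mod_eq_of_lt i.isLt]
  | succ nn ih =>
    rw [pow_succ', mul_assoc, shiftM_mul, ih]
    congr 1
    apply Fin.ext
    simp only
    rw [Nat.mod_add_mod]
    congr 1
    omega

lemma mul_shiftM_transpose (T : ℕ) (hT : 0 < T) (M : Matrix (Fin T) (Fin T) ℤ)
    (nn : ℕ) (i j : Fin T) :
    (M * (shiftM T ^ nn)ᵀ) i j = M i ⟨((j:ℕ)+nn) % T, Nat.mod_lt _ hT⟩ := by
  have : (M * (shiftM T ^ nn)ᵀ) i j = ((shiftM T ^ nn) * Mᵀ)ᵀ i j := by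
    rw [Matrix.transpose_mul, Matrix.transpose_transpose]
  rw [this, Matrix.transpose_apply, shiftM_pow_mul T hT, Matrix.transpose_apply]

lemma succ_mod_inj {T : ℕ} (i j : Fin T) (h : ((i:ℕ)+1) % T = ((j:ℕ)+1) % T) : i = j := by
  have hi := i.isLt
  have hj := j.isLt
  apply Fin.ext
  have e1 : ((i:ℕ)+1) % T = if (i:ℕ)+1 = T then 0 else (i:ℕ)+1 := by
    split
    · next hh => rw [hh, Nat.mod_self]
    · next hh => exact Nat.mod_eq_of_lt (by omega)
  have e2 : ((j:ℕ)+1) % T = if (j:ℕ)+1 = T then 0 else (j:ℕ)+1 := by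
    split
    · next hh => rw [hh, Nat.mod_self]
    · next hh => exact Nat.mod_eq_of_lt (by omega)
  rw [e1, e2] at h
  split at h <;> split at h <;> omega

lemma shiftM_mul_transpose (T : ℕ) : shiftM T * (shiftM T)ᵀ = 1 := by
  ext i j
  simp only [Matrix.mul_apply, shiftM, Matrix.transpose_apply, Matrix.of_apply, Matrix.one_apply]
  by_cases hij : i = j
  · subst hij
    rw [if_pos rfl]
    rw [Finset.sum_eq_single (⟨((i:ℕ)+1) % T, Nat.mod_lt _ (Fin.pos i)⟩ : Fin T)]
    · rw [if_pos rfl, one_mul]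
    · intro c _ hc
      rw [if_neg (fun h => hc (Fin.ext h)), zero_mul]
    · intro h; exact absurd (Finset.mem_univ _) h
  · rw [if_neg hij]
    apply Finset.sum_eq_zero
    intro c _
    by_cases h1 : (c:ℕ) = ((i:ℕ)+1) % T
    · have h2 : ¬ ((c:ℕ) = ((j:ℕ)+1) % T) := by
        intro h2
        exact hij (succ_mod_inj i j (by omega))
      rw [if_neg h2, mul_zero]
    · rw [if_neg h1, zero_mul]

lemma shiftM_pow_mul_transpose (T : ℕ) (nn : ℕ) :
    shiftM T ^ nn * (shiftM T ^ nn)ᵀ = 1 := by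
  induction nn with
  | zero => simp
  | succ nn ih =>
    have : shiftM T ^ (nn+1) = shiftM T ^ nn * shiftM T := pow_succ _ _
    rw [this, Matrix.transpose_mul, ← mul_assoc, mul_assoc (shiftM T ^ nn),
      shiftM_mul_transpose, mul_one, ih]

lemma det_shiftM (T : ℕ) (hT : 0 < T) : (shiftM T).det = (-1) ^ (T - 1) := by
  obtain ⟨r, rfl⟩ : ∃ r, T = r + 1 := ⟨T - 1, by omega⟩
  rw [Matrix.det_succ_column_zero]
  rw [Finset.sum_eq_single (Fin.last r)]
  · have h0 : shiftM (r+1) (Fin.last r) 0 = 1 := by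
      simp [shiftM, Nat.mod_self]
    have hsub : (shiftM (r+1)).submatrix (Fin.last r).succAbove Fin.succ = 1 := by
      ext a b
      simp only [Matrix.submatrix_apply, Fin.succAbove_last, shiftM, Matrix.of_apply,
        Matrix.one_apply]
      have hc : ((Fin.castSucc a : Fin (r+1)) : ℕ) = (a:ℕ) := rfl
      have hs : ((Fin.succ b : Fin (r+1)) : ℕ) = (b:ℕ) + 1 := rfl
      rw [hc, hs, Nat.mod_eq_of_lt (by omega)]
      by_cases hab : a = b
      · subst hab; rw [if_pos rfl, if_pos rfl]
      · rw [if_neg (by exact fun h => hab (Fin.ext (by omega))), if_neg hab]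
    rw [h0, hsub, Matrix.det_one, Fin.val_last]
    norm_num
  · intro c _ hc
    have : shiftM (r+1) c 0 = 0 := by
      simp only [shiftM, Matrix.of_apply]
      rw [if_neg]
      intro h
      rw [show ((0 : Fin (r+1)) : ℕ) = 0 from rfl] at h
      have hlt := c.isLt
      by_cases hh : (c:ℕ)+1 = r+1
      · exact hc (Fin.ext (show (c:ℕ) = (Fin.last r : ℕ) by rw [Fin.val_last]; omega))
      · rw [Nat.mod_eq_of_lt (by omega)] at h
        omega
    rw [this, mul_zero, zero_mul]
  · intro h; exact absurd (Finset.mem_univ _) h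

lemma det_revM (r : ℕ) : (revM r).det = (-1) ^ (r.choose 2) := by
  induction r with
  | zero => simp [revM]
  | succ r ih =>
    rw [Matrix.det_succ_row_zero]
    rw [Finset.sum_eq_single (Fin.last r)]
    · have h0 : revM (r+1) 0 (Fin.last r) = 1 := by
        simp [revM]
      have hsub : (revM (r+1)).submatrix Fin.succ (Fin.last r).succAbove = revM r := by
        ext a b
        simp only [Matrix.submatrix_apply, Fin.succAbove_last, revM, Matrix.of_apply]
        have hs : ((Fin.succ a : Fin (r+1)) : ℕ) = (a:ℕ) + 1 := rfl
        have hc : ((Fin.castSucc b : Fin (r+1)) : ℕ) = (b:ℕ) := rfl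
        rw [hs, hc]
        by_cases hab : (a:ℕ) + (b:ℕ) = r - 1
        · rw [if_pos (by omega), if_pos hab]
        · rw [if_neg (by omega), if_neg hab]
      rw [h0, hsub, ih, Fin.val_last]
      have : (r+1).choose 2 = r.choose 2 + r := by
        rw [Nat.choose_succ_succ]
        simp [Nat.choose_one_right, Nat.add_comm]
      rw [this, pow_add]
      ring
    · intro c _ hc
      have : revM (r+1) 0 c = 0 := by
        simp only [revM, Matrix.of_apply]
        rw [if_neg]
        intro h
        simp only [Fin.val_zero, zero_add] at h
        exact hc (Fin.ext (show (c:ℕ) = (Fin.last r : ℕ) by rw [Fin.val_last]; omega))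
      rw [this, mul_zero, zero_mul]
    · intro h; exact absurd (Finset.mem_univ _) h

lemma revM_mul (r : ℕ) (M : Matrix (Fin r) (Fin r) ℤ) (i j : Fin r) :
    (revM r * M) i j = M ⟨r - 1 - (i:ℕ), by omega⟩ j := by
  simp only [Matrix.mul_apply, revM, Matrix.of_apply]
  rw [Finset.sum_eq_single (⟨r - 1 - (i:ℕ), by omega⟩ : Fin r)]
  · rw [if_pos (show (i:ℕ) + (r - 1 - (i:ℕ)) = r - 1 by have := i.isLt; omega), one_mul]
  · intro c _ hc
    rw [if_neg (fun h => hc (Fin.ext (show (c:ℕ) = r - 1 - (i:ℕ) by have := c.isLt; omega))),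
      zero_mul]
  · intro h; exact absurd (Finset.mem_univ _) h


lemma key_block {N n : ℕ} (K K' : Matrix (Fin N ⊕ Fin n) (Fin N ⊕ Fin n) ℤ)
    (hKK' : K * K' = 1) (h22 : K.toBlocks₂₂ = 0) :
    K.det * (K'.toBlocks₂₂).det = (K.toBlocks₁₁).det := by
  set A := K.toBlocks₁₁
  set B := K.toBlocks₁₂
  set C := K.toBlocks₂₁
  set A' := K'.toBlocks₁₁
  set B' := K'.toBlocks₁₂
  set C' := K'.toBlocks₂₁
  set D' := K'.toBlocks₂₂
  have hK : K = fromBlocks A B C 0 := by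
    rw [← h22]; exact (fromBlocks_toBlocks K).symm
  have hK' : K' = fromBlocks A' B' C' D' := (fromBlocks_toBlocks K').symm
  have hmul := hKK'
  rw [hK, hK', fromBlocks_multiply] at hmul
  have h12 : A * B' + B * D' = 0 := by
    have := congrArg Matrix.toBlocks₁₂ hmul
    have hone12 : (1 : Matrix (Fin N ⊕ Fin n) (Fin N ⊕ Fin n) ℤ).toBlocks₁₂ = 0 := by
      ext a b
      simp [Matrix.toBlocks₁₂, Matrix.one_apply]
    rw [Matrix.toBlocks_fromBlocks₁₂, hone12] at this
    simpa using this
  have hone : (1 : Matrix (Fin N ⊕ Fin n) (Fin N ⊕ Fin n) ℤ).toBlocks₂₂ = 1 := by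
    ext a b
    simp [Matrix.toBlocks₂₂, Matrix.one_apply, Sum.inr.injEq]
  have hCB' : C * B' = 1 := by
    have := congrArg Matrix.toBlocks₂₂ hmul
    rw [Matrix.toBlocks_fromBlocks₂₂, hone] at this
    simpa using this
  have key : K * fromBlocks 1 B' 0 D' = fromBlocks A 0 C 1 := by
    rw [hK, fromBlocks_multiply]
    congr 1 <;> simp [h12, hCB']
  have hdet := congrArg Matrix.det key
  rw [Matrix.det_mul, Matrix.det_fromBlocks_zero₂₁, Matrix.det_fromBlocks_zero₁₂] at hdet
  simpa using hdet


lemma convCatalanZ_cast_sub (K a b : ℕ) :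
    convCatalanZ K ((a:ℤ) - b) = if b ≤ a then convCatalan K (a - b) else 0 := by
  unfold convCatalanZ
  by_cases h : b ≤ a
  · rw [if_neg (by omega : ¬((a:ℤ) - b < 0)), if_pos h]
    congr 1
    omega
  · rw [if_pos (by omega), if_neg h]

lemma choose_two_add (n t : ℕ) : (n+t).choose 2 = n.choose 2 + t.choose 2 + n*t := by
  induction n with
  | zero => simp
  | succ n ih =>
    have h1 : (n+t+1).choose 2 = (n+t).choose 2 + (n+t) := by
      rw [Nat.choose_succ_succ]
      simp [Nat.choose_one_right, Nat.add_comm]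
    have h2 : (n+1).choose 2 = n.choose 2 + n := by
      rw [Nat.choose_succ_succ]
      simp [Nat.choose_one_right, Nat.add_comm]
    have e : n+1+t = n+t+1 := by omega
    rw [e, h1, ih, h2]
    ring

lemma signs (n t : ℕ) (ht : 1 ≤ t) :
    ((-1:ℤ)^((n+t).choose 2)) * (((-1:ℤ)^(n+t+n-1))^n * ((-1:ℤ)^n * (-1:ℤ)^(n.choose 2)))
      = (-1:ℤ)^(t.choose 2) := by
  obtain ⟨t', rfl⟩ : ∃ t', t = t' + 1 := ⟨t - 1, by omega⟩
  have e1 : n+(t'+1)+n-1 = 2*n + t' := by omega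
  rw [e1, choose_two_add, ← pow_mul, ← pow_add, ← pow_add, ← pow_add]
  have e2 : n.choose 2 + (t' + 1).choose 2 + n * (t' + 1) + ((2 * n + t') * n + (n + n.choose 2))
      = (t'+1).choose 2 + 2*(n.choose 2 + n*n + n*t' + n) := by ring
  rw [e2, pow_add, pow_mul]
  norm_num

end Cig

/-- Cigler's even identity. -/
theorem cigler_even (k m n : ℕ) (hk : 1 ≤ k) (hm : 1 ≤ m) :
    hankelDet (2 * k) (1 - (k : ℤ) - m) (n + m + k) =
      (-1) ^ ((m + k).choose 2) * hankelDet (2 * k) (1 - (k : ℤ) + m) n := by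
  set N := n + m + k with hNdef
  have hT : 0 < N + n := by omega
  set Hmat : Matrix (Fin N) (Fin N) ℤ :=
    Matrix.of fun i j : Fin N => convCatalanZ (2 * k) ((i : ℕ) + (j : ℕ) + (1 - (k : ℤ) - m))
    with hHmat
  set Bmat : Matrix (Fin n) (Fin n) ℤ :=
    Matrix.of fun i j : Fin n => convCatalanZ (2 * k) ((i : ℕ) + (j : ℕ) + (1 - (k : ℤ) + m))
    with hBmat
  have hgoal1 : hankelDet (2 * k) (1 - (k : ℤ) - m) N = Hmat.det := rfl
  have hgoal2 : hankelDet (2 * k) (1 - (k : ℤ) + m) n = Bmat.det := rfl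
  rw [hgoal1, hgoal2]
  -- set up the big matrices
  set φ : PowerSeries ℤ := Cig.cS ^ (2 * k) with hφ
  set ψ : PowerSeries ℤ := Cig.dS ^ (2 * k) with hψ
  set Lm := Cig.toepS φ (N + n) with hLm
  set Gm := Cig.toepS ψ (N + n) with hGm
  have hLG : Lm * Gm = 1 := by
    rw [hLm, hGm, Cig.toepS_mul, hφ, hψ, ← mul_pow, Cig.cS_mul_dS, one_pow, Cig.toepS_one]
  set Km := Cig.shiftM (N + n) ^ n * Lm with hKm
  set K'm := Gm * (Cig.shiftM (N + n) ^ n)ᵀ with hK'm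
  have hKK' : Km * K'm = 1 := by
    rw [hKm, hK'm, mul_assoc, ← mul_assoc Lm Gm, hLG, one_mul,
      Cig.shiftM_pow_mul_transpose]
  set ε : Fin N ⊕ Fin n ≃ Fin (N + n) := finSumFinEquiv with hε
  set KS := Km.submatrix ε ε with hKS
  set K'S := K'm.submatrix ε ε with hK'S
  have hKSmul : KS * K'S = 1 := by
    rw [hKS, hK'S, Matrix.submatrix_mul_equiv, hKK', Matrix.submatrix_one_equiv]
  -- the bottom-right block of KS vanishes
  have h22 : KS.toBlocks₂₂ = 0 := by
    ext i j
    show Km (ε (Sum.inr i)) (ε (Sum.inr j)) = 0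
    rw [hKm, Cig.shiftM_pow_mul _ hT]
    have hi : (ε (Sum.inr i) : ℕ) = N + i := by simp [hε]
    have hj : (ε (Sum.inr j) : ℕ) = N + j := by simp [hε]
    have hmod : ((ε (Sum.inr i) : ℕ) + n) % (N + n) = (i : ℕ) := by
      rw [hi, show N + (i : ℕ) + n = (i : ℕ) + (N + n) by omega, Nat.add_mod_right]
      exact Nat.mod_eq_of_lt (by omega)
    rw [hLm]
    show (if (ε (Sum.inr j) : ℕ) ≤ (((ε (Sum.inr i) : ℕ) + n) % (N + n)) then _ else 0) = 0
    rw [if_neg]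
    rw [hmod, hj]
    have := i.isLt
    omega
  -- identify the top-left block of KS
  have h11 : KS.toBlocks₁₁ = (Cig.revM N * Hmat)ᵀ := by
    ext i j
    show Km (ε (Sum.inl i)) (ε (Sum.inl j)) = (Cig.revM N * Hmat) j i
    rw [hKm, Cig.shiftM_pow_mul _ hT, Cig.revM_mul]
    have hi : (ε (Sum.inl i) : ℕ) = (i : ℕ) := by simp [hε]
    have hj : (ε (Sum.inl j) : ℕ) = (j : ℕ) := by simp [hε]
    have hmod : ((ε (Sum.inl i) : ℕ) + n) % (N + n) = (i : ℕ) + n := by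
      rw [hi]
      exact Nat.mod_eq_of_lt (by have := i.isLt; omega)
    rw [hLm]
    show (if (ε (Sum.inl j) : ℕ) ≤ (((ε (Sum.inl i) : ℕ) + n) % (N + n)) then
        (PowerSeries.coeff (R := ℤ) ((((ε (Sum.inl i) : ℕ) + n) % (N + n)) - (ε (Sum.inl j) : ℕ))) φ
      else 0) = _
    rw [hmod, hj, hHmat]
    have hjN := j.isLt
    have hidx : ((N - 1 - (j : ℕ) : ℕ) : ℤ) + ((i : ℕ) : ℤ) + (1 - (k : ℤ) - m)
        = (((i : ℕ) + n : ℕ) : ℤ) - ((j : ℕ) : ℕ) := by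
      push_cast
      omega
    show _ = convCatalanZ (2 * k) (((N - 1 - (j : ℕ) : ℕ) : ℤ) + ((i : ℕ) : ℤ) + (1 - (k : ℤ) - m))
    rw [hidx, Cig.convCatalanZ_cast_sub, hφ]
    split
    · rw [Cig.coeff_cS_pow]
    · rfl
  -- identify the bottom-right block of K'S
  have hDD : K'S.toBlocks₂₂ = -(Cig.revM n * Bmat)ᵀ := by
    ext i j
    show K'm (ε (Sum.inr i)) (ε (Sum.inr j)) = (-(Cig.revM n * Bmat)ᵀ) i j
    rw [Matrix.neg_apply, Matrix.transpose_apply, Cig.revM_mul, hK'm,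
      Cig.mul_shiftM_transpose _ hT]
    have hi : (ε (Sum.inr i) : ℕ) = N + i := by simp [hε]
    have hj : (ε (Sum.inr j) : ℕ) = N + j := by simp [hε]
    have hmod : ((ε (Sum.inr j) : ℕ) + n) % (N + n) = (j : ℕ) := by
      rw [hj, show N + (j : ℕ) + n = (j : ℕ) + (N + n) by omega, Nat.add_mod_right]
      exact Nat.mod_eq_of_lt (by omega)
    rw [hGm]
    show (if (((ε (Sum.inr j) : ℕ) + n) % (N + n)) ≤ (ε (Sum.inr i) : ℕ) then
        (PowerSeries.coeff (R := ℤ) ((ε (Sum.inr i) : ℕ) - (((ε (Sum.inr j) : ℕ) + n) % (N + n)))) ψ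
      else 0) = _
    rw [hmod, hi]
    have hin := i.isLt
    have hjn := j.isLt
    rw [if_pos (by omega)]
    rw [hψ, Cig.coeff_dS_pow_head k (N + (i : ℕ) - j) (by omega)]
    have hbody : (if 2 * k ≤ N + (i : ℕ) - j then
        (PowerSeries.coeff (R := ℤ) (N + (i : ℕ) - j - 2 * k)) (Cig.cS ^ (2 * k)) else 0)
        = convCatalanZ (2 * k) (((N + (i : ℕ) - (j : ℕ) : ℕ) : ℤ) - ((2 * k : ℕ) : ℤ)) := by
      rw [Cig.convCatalanZ_cast_sub]
      split
      · rw [Cig.coeff_cS_pow]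
      · rfl
    rw [hbody, hBmat]
    have hidx : (((N + (i : ℕ) - (j : ℕ) : ℕ) : ℤ) - ((2 * k : ℕ) : ℤ))
        = ((n - 1 - (j : ℕ) : ℕ) : ℤ) + ((i : ℕ) : ℤ) + (1 - (k : ℤ) + m) := by
      push_cast
      omega
    rw [hidx]
    rfl
  -- determinants
  have hconst : PowerSeries.constantCoeff (R := ℤ) φ = 1 := by
    rw [hφ, map_pow]
    have : PowerSeries.constantCoeff (R := ℤ) Cig.cS = 1 := by simp [Cig.cS]
    rw [this, one_pow]
  have hdetKS : KS.det = ((-1 : ℤ) ^ (N + n - 1)) ^ n := by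
    rw [hKS, Matrix.det_submatrix_equiv_self, hKm, Matrix.det_mul, Matrix.det_pow,
      Cig.det_shiftM _ hT, hLm, Cig.det_toepS _ _ hconst, mul_one]
  have hdetA : (KS.toBlocks₁₁).det = (-1 : ℤ) ^ (N.choose 2) * Hmat.det := by
    rw [h11, Matrix.det_transpose, Matrix.det_mul, Cig.det_revM]
  have hdetDD : (K'S.toBlocks₂₂).det = (-1 : ℤ) ^ n * ((-1 : ℤ) ^ (n.choose 2) * Bmat.det) := by
    rw [hDD, Matrix.det_neg, Matrix.det_transpose, Matrix.det_mul, Cig.det_revM,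
      Fintype.card_fin]
  have key := Cig.key_block KS K'S hKSmul h22
  rw [hdetKS, hdetDD, hdetA] at key
  -- final sign bookkeeping
  have hsq : (-1 : ℤ) ^ (N.choose 2) * (-1 : ℤ) ^ (N.choose 2) = 1 := by
    rw [← pow_add, ← two_mul, pow_mul]
    norm_num
  have hsgn := Cig.signs n (m + k) (by omega)
  calc Hmat.det = ((-1 : ℤ) ^ (N.choose 2) * (-1 : ℤ) ^ (N.choose 2)) * Hmat.det := by
        rw [hsq, one_mul]
    _ = (-1 : ℤ) ^ (N.choose 2) * (((-1 : ℤ) ^ (N + n - 1)) ^ n *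
          ((-1 : ℤ) ^ n * ((-1 : ℤ) ^ (n.choose 2) * Bmat.det))) := by
        rw [mul_assoc, ← key]
    _ = ((-1 : ℤ) ^ (N.choose 2) * (((-1 : ℤ) ^ (N + n - 1)) ^ n *
          ((-1 : ℤ) ^ n * (-1 : ℤ) ^ (n.choose 2)))) * Bmat.det := by ring
    _ = (-1 : ℤ) ^ ((m + k).choose 2) * Bmat.det := by
        rw [show N = n + (m + k) by omega] at *
        rw [show n + (m + k) + n - 1 = n + (m + k) + n - 1 from rfl]
        rw [hsgn]
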